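/- An Alexander quandle X (a ℤ[T^{±1}]-module with operation x◁y = y + T(x−y)) is connected if and only if (1−T)X = X. -/

import Mathlib

open LaurentPolynomial

/-- The right translation `(· ◁ y)` of the Alexander quandle as a permutation. -/
noncomputable def alexAct {X : Type*} [AddCommGroup X] [Module (LaurentPolynomial ℤ) X]
    (y : X) : Equiv.Perm X where
  toFun x := (T 1 : LaurentPolynomial ℤ) • x + (1 - (T 1 : LaurentPolynomial ℤ)) • y
  invFun x := (T (-1) : LaurentPolynomial ℤ) •
    (x - (1 - (T 1 : LaurentPolynomial ℤ)) • y)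
  left_inv x := by
    have h : (T (-1) : LaurentPolynomial ℤ) * T 1 = 1 := by
      rw [← T_add]; norm_num
    show (T (-1) : LaurentPolynomial ℤ) •
      ((T 1 : LaurentPolynomial ℤ) • x + (1 - (T 1 : LaurentPolynomial ℤ)) • y
        - (1 - (T 1 : LaurentPolynomial ℤ)) • y) = x
    rw [add_sub_cancel_right, smul_smul, h, one_smul]
  right_inv x := by
    have h : (T 1 : LaurentPolynomial ℤ) * T (-1) = 1 := by
      rw [← T_add]; norm_num
    show (T 1 : LaurentPolynomial ℤ) • ((T (-1) : LaurentPolynomial ℤ) •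
      (x - (1 - (T 1 : LaurentPolynomial ℤ)) • y)) + (1 - (T 1 : LaurentPolynomial ℤ)) • y = x
    rw [smul_smul, h, one_smul, sub_add_cancel]

/-- An Alexander quandle `X` is connected if and only if `(1-T)X = X`. -/
theorem stmt8 (X : Type*) [AddCommGroup X] [Module (LaurentPolynomial ℤ) X] :
    (∀ x y : X, ∃ f ∈ Subgroup.closure (Set.range (alexAct (X := X))), f x = y) ↔
      Function.Surjective (fun x : X => (1 - (T 1 : LaurentPolynomial ℤ)) • x) := by
  constructor
  · intro hc y
    obtain ⟨f, hf, hfy⟩ := hc 0 y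
    have key : ∀ f ∈ Subgroup.closure (Set.range (alexAct (X := X))),
        ∀ x : X, ∃ w : X, (1 - (T 1 : LaurentPolynomial ℤ)) • w = f x - x := by
      intro f hf
      induction hf using Subgroup.closure_induction with
      | mem g hg =>
        obtain ⟨z, rfl⟩ := hg
        intro x
        refine ⟨z - x, ?_⟩
        show (1 - (T 1 : LaurentPolynomial ℤ)) • (z - x) =
          ((T 1 : LaurentPolynomial ℤ) • x + (1 - (T 1 : LaurentPolynomial ℤ)) • z) - x
        module
      | one => intro x; exact ⟨0, by simp⟩
      | mul g h _ _ hg hh =>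
        intro x
        obtain ⟨w1, h1⟩ := hg (h x)
        obtain ⟨w2, h2⟩ := hh x
        refine ⟨w1 + w2, ?_⟩
        rw [smul_add, h1, h2]
        show g (h x) - h x + (h x - x) = (g * h) x - x
        simp [sub_add_sub_cancel]
      | inv g _ hg =>
        intro x
        obtain ⟨w, hw⟩ := hg (g⁻¹ x)
        refine ⟨-w, ?_⟩
        rw [smul_neg, hw]
        have : g (g⁻¹ x) = x := Equiv.apply_symm_apply g x
        rw [this]
        show -(x - g⁻¹ x) = g⁻¹ x - x
        abel
    obtain ⟨w, hw⟩ := key f hf 0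
    exact ⟨w, by simpa [hfy] using hw⟩
  · intro hs x y
    obtain ⟨z, hz⟩ := hs (y - (T 1 : LaurentPolynomial ℤ) • x)
    refine ⟨alexAct z, Subgroup.subset_closure ⟨z, rfl⟩, ?_⟩
    show (T 1 : LaurentPolynomial ℤ) • x + (1 - (T 1 : LaurentPolynomial ℤ)) • z = y
    simp only at hz
    rw [hz]
    abel
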